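/- Let C be a category with object A satisfying the Galois assumptions (every arrow strictly epi, A maps onto every object, Hom(A,-) preserves strict epis). Then every arrow x : A → X exhibits X as the categorical quotient of A by the subgroup Fix(x) ⊆ Aut(A): for any arrow y : A → Y invariant under Fix(x) (i.e., y∘h = y for all h ∈ Fix(x)), there is a unique f : X → Y with f∘x = y. -/

import Mathlib

open CategoryTheory

universe v u

/-- Grothendieck strict epimorphism. -/
def IsStrictEpi {C : Type u} [Category.{v} C] {X Y : C} (f : X ⟶ Y) : Prop :=
  ∀ {Z : C} (g : X ⟶ Z),
    (∀ {W : C} (s t : W ⟶ X), s ≫ f = t ≫ f → s ≫ g = t ≫ g) →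
    ∃! h : Y ⟶ Z, f ≫ h = g

/-- Every arrow `x : A ⟶ X` is the categorical quotient of `A` by `Fix(x) ⊆ Aut(A)`:
every `y : A ⟶ Y` invariant under `Fix(x)` factors uniquely through `x`. -/
theorem stmt4 {C : Type u} [Category.{v} C] (A : C)
    (h1 : ∀ {X Y : C} (f : X ⟶ Y), IsStrictEpi f)
    (h2 : ∀ X : C, Nonempty (A ⟶ X))
    (h3 : ∀ {X Y : C} (f : X ⟶ Y), IsStrictEpi f →
      IsStrictEpi (C := Type v) (X := A ⟶ X) (Y := A ⟶ Y) (TypeCat.ofHom (fun g : A ⟶ X => g ≫ f))) :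
    ∀ (X Y : C) (x : A ⟶ X) (y : A ⟶ Y),
      (∀ h : A ≅ A, h.hom ≫ x = x → h.hom ≫ y = y) →
      ∃! f : X ⟶ Y, x ≫ f = y := by
  have strictEpi_epi : ∀ {X Y : C} (f : X ⟶ Y), Epi f := by
    intro X Y f
    constructor
    intro Z u v huv
    obtain ⟨h, hh, huniq⟩ := h1 f (f ≫ u)
      (fun s t hst => by rw [← Category.assoc, ← Category.assoc, hst])
    rw [huniq u rfl, huniq v huv.symm]
  -- every endomorphism of A has a right inverse
  have hsect : ∀ e : A ⟶ A, ∃ r : A ⟶ A, r ≫ e = 𝟙 A := by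
    intro e
    have his : IsStrictEpi (C := Type v) (TypeCat.ofHom (fun g : A ⟶ A => g ≫ e)) := h3 e (h1 e)
    have hepi : Epi (C := Type v) (TypeCat.ofHom (fun g : A ⟶ A => g ≫ e)) := by
      constructor
      intro Z u v huv
      obtain ⟨h, hh, huniq⟩ := his (TypeCat.ofHom (fun g : A ⟶ A => g ≫ e) ≫ u)
        (fun s t hst => by
          rw [← Category.assoc, ← Category.assoc, hst])
      rw [huniq u rfl, huniq v huv.symm]
    have hsurj := (epi_iff_surjective _).mp hepi
    obtain ⟨r, hr⟩ := hsurj (𝟙 A)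
    exact ⟨r, hr⟩
  -- every endomorphism of A is an iso
  have hiso : ∀ e : A ⟶ A, ∃ r : A ⟶ A, r ≫ e = 𝟙 A ∧ e ≫ r = 𝟙 A := by
    intro e
    obtain ⟨r, hr⟩ := hsect e
    obtain ⟨r', hr'⟩ := hsect r
    have he : e = r' := by
      calc e = (r' ≫ r) ≫ e := by rw [hr', Category.id_comp]
        _ = r' ≫ (r ≫ e) := by rw [Category.assoc]
        _ = r' := by rw [hr, Category.comp_id]
    exact ⟨r, hr, by rw [he, hr']⟩
  intro X Y x y hinv
  apply h1 x y
  intro W s t hst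
  obtain ⟨a⟩ := h2 W
  set u : A ⟶ A := a ≫ s with hu
  set v : A ⟶ A := a ≫ t with hv
  obtain ⟨ui, hui1, hui2⟩ := hiso u
  obtain ⟨vi, hvi1, hvi2⟩ := hiso v
  have huvx : u ≫ x = v ≫ x := by
    rw [hu, hv, Category.assoc, Category.assoc, hst]
  let h : A ≅ A :=
    { hom := vi ≫ u
      inv := ui ≫ v
      hom_inv_id := by
        rw [Category.assoc, ← Category.assoc u ui v, hui2, Category.id_comp, hvi1]
      inv_hom_id := by
        rw [Category.assoc, ← Category.assoc v vi u, hvi2, Category.id_comp, hui1] }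
  have hx : h.hom ≫ x = x := by
    show (vi ≫ u) ≫ x = x
    rw [Category.assoc, huvx, ← Category.assoc, hvi1, Category.id_comp]
  have hy := hinv h hx
  have huvy : u ≫ y = v ≫ y := by
    have : (vi ≫ u) ≫ y = y := hy
    calc u ≫ y = (v ≫ vi) ≫ u ≫ y := by rw [hvi2, Category.id_comp]
      _ = v ≫ (vi ≫ u) ≫ y := by simp only [Category.assoc]
      _ = v ≫ y := by rw [this]
  have hcomp : a ≫ s ≫ y = a ≫ t ≫ y := by
    rw [← Category.assoc, ← Category.assoc]; exact huvy
  haveI := strictEpi_epi a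
  exact (cancel_epi a).mp hcomp
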